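/- Under the Piola–Kirchhoff transformation M∘F = B M̂ Bᵀ / |det B| for the affine map F(x̂) = B x̂ + a with invertible B, the identity |det B| · (div div M)∘F = div div M̂ holds for any twice continuously differentiable symmetric tensor field M̂. -/

import Mathlib

open Matrix

noncomputable section

/-- Partial derivative in direction `i`. -/
def pd (i : Fin 2) (f : (Fin 2 → ℝ) → ℝ) : (Fin 2 → ℝ) → ℝ :=
  fun x => fderiv ℝ f x (Pi.single i 1)

/-- `div div N = Σ_{i,j} ∂ᵢ∂ⱼ N_{ij}` for a matrix-valued field `N`. -/
def divdivT (N : (Fin 2 → ℝ) → Matrix (Fin 2) (Fin 2) ℝ) : (Fin 2 → ℝ) → ℝ :=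
  fun x => ∑ i : Fin 2, ∑ j : Fin 2, pd i (pd j (fun y => N y i j)) x

/-- Piola–Kirchhoff transformation: `|det B| · (div div M)∘F = div div M̂`. -/
lemma pd_const_mul (c : ℝ) (f : (Fin 2 → ℝ) → ℝ) (i : Fin 2) (x : Fin 2 → ℝ)
    (hf : DifferentiableAt ℝ f x) :
    pd i (fun y => c * f y) x = c * pd i f x := by
  unfold pd
  rw [fderiv_const_mul hf]
  simp

lemma pd_sum (f : Fin 2 → (Fin 2 → ℝ) → ℝ) (i : Fin 2) (x : Fin 2 → ℝ)
    (hf : ∀ k, DifferentiableAt ℝ (f k) x) :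
    pd i (fun y => ∑ k, f k y) x = ∑ k, pd i (f k) x := by
  unfold pd
  rw [fderiv_fun_sum (fun k _ => hf k)]
  simp

lemma pd_comp_affine (A : Matrix (Fin 2) (Fin 2) ℝ) (b : Fin 2 → ℝ)
    (f : (Fin 2 → ℝ) → ℝ) (hf : Differentiable ℝ f) (i : Fin 2) (x : Fin 2 → ℝ) :
    pd i (fun z => f (A.mulVec z + b)) x = ∑ p, A p i * pd p f (A.mulVec x + b) := by
  have hL : HasFDerivAt (fun z : Fin 2 → ℝ => A.mulVec z + b)
      (A.mulVecLin.toContinuousLinearMap) x := by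
    have h1 : HasFDerivAt (fun z : Fin 2 → ℝ => A.mulVec z)
        (A.mulVecLin.toContinuousLinearMap) x :=
      A.mulVecLin.toContinuousLinearMap.hasFDerivAt
    simpa using h1.add_const b
  have hcomp := ((hf (A.mulVec x + b)).hasFDerivAt.comp x hL)
  have hfd : fderiv ℝ (fun z => f (A.mulVec z + b)) x
      = (fderiv ℝ f (A.mulVec x + b)).comp A.mulVecLin.toContinuousLinearMap := by
    have := hcomp.fderiv
    rw [← this]
    congr 1
  rw [pd, hfd]
  have hv : A.mulVec (Pi.single i 1) = ∑ p, (A p i) • (Pi.single p 1 : Fin 2 → ℝ) := by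
    funext q
    simp [Matrix.mulVec_single, Finset.sum_apply, Pi.single_apply]
  simp only [ContinuousLinearMap.comp_apply]
  show fderiv ℝ f (A.mulVec x + b) (A.mulVecLin.toContinuousLinearMap (Pi.single i 1)) = _
  have : (A.mulVecLin.toContinuousLinearMap (Pi.single i 1)) = A.mulVec (Pi.single i 1) := rfl
  rw [this, hv, map_sum]
  simp [pd]

lemma pd_differentiable (f : (Fin 2 → ℝ) → ℝ) (hf : ContDiff ℝ 2 f) (p : Fin 2) :
    Differentiable ℝ (pd p f) := by
  have h1 : Differentiable ℝ (fun x => fderiv ℝ f x) :=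
    (hf.fderiv_right (m := 1) (by norm_num)).differentiable (by norm_num)
  exact h1.clm_apply (differentiable_const _)

lemma key_sum (C B : Matrix (Fin 2) (Fin 2) ℝ) (hCB : C * B = 1)
    (D : Fin 2 → Fin 2 → Fin 2 → Fin 2 → ℝ) :
    ∑ i, ∑ j, ∑ k, ∑ l, B i k * B j l * ∑ q, C q j * ∑ r, C r i * D r q k l
      = ∑ k, ∑ l, D k l k l := by
  have hs : ∀ r k : Fin 2, (∑ i, C r i * B i k) = if r = k then (1:ℝ) else 0 := by
    intro r k
    rw [← Matrix.mul_apply, hCB]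
    simp [Matrix.one_apply]
  calc ∑ i, ∑ j, ∑ k, ∑ l, B i k * B j l * ∑ q, C q j * ∑ r, C r i * D r q k l
      = ∑ k, ∑ l, ∑ q, ∑ r, (∑ i, C r i * B i k) * ((∑ j, C q j * B j l) * D r q k l) := by
        simp only [Fin.sum_univ_two]
        ring
    _ = ∑ k, ∑ l, D k l k l := by
        simp only [hs]
        simp [Fin.sum_univ_two]

theorem stmt_13 (B : Matrix (Fin 2) (Fin 2) ℝ) (hB : IsUnit B.det) (a : Fin 2 → ℝ)
    (Mhat M : (Fin 2 → ℝ) → Matrix (Fin 2) (Fin 2) ℝ)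
    (hsmooth : ∀ i j : Fin 2, ContDiff ℝ 2 (fun x => Mhat x i j))
    (hsym : ∀ x, (Mhat x).IsSymm)
    (hPK : ∀ x, |B.det| • M (B.mulVec x + a) = B * Mhat x * Bᵀ) :
    ∀ x, |B.det| * divdivT M (B.mulVec x + a) = divdivT Mhat x := by
  intro x
  set c := |B.det| with hcdef
  have hdet : B.det ≠ 0 := by
    intro h
    rw [h] at hB
    exact (by simpa using hB : IsUnit (0:ℝ)).ne_zero rfl
  have hc : c ≠ 0 := abs_ne_zero.mpr hdet
  set C := B⁻¹ with hCdef
  have hCB : C * B = 1 := Matrix.nonsing_inv_mul B hB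
  have hBC : B * C = 1 := Matrix.mul_nonsing_inv B hB
  set a' : Fin 2 → ℝ := -(C.mulVec a) with ha'
  have hFG : ∀ y, B.mulVec (C.mulVec y + a') + a = y := by
    intro y
    simp only [ha', Matrix.mulVec_add, Matrix.mulVec_neg, Matrix.mulVec_mulVec, hBC, Matrix.one_mulVec]
    abel
  have hGF : ∀ z, C.mulVec (B.mulVec z + a) + a' = z := by
    intro z
    simp only [ha', Matrix.mulVec_add, Matrix.mulVec_mulVec, hCB, Matrix.one_mulVec]
    abel
  -- entrywise formula for M
  have hM : ∀ y, M y = c⁻¹ • (B * Mhat (C.mulVec y + a') * Bᵀ) := by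
    intro y
    have h := hPK (C.mulVec y + a')
    rw [hFG y] at h
    rw [← h, smul_smul, inv_mul_cancel₀ hc, one_smul]
  have hMfun : ∀ i j : Fin 2, (fun z => M z i j)
      = fun z => c⁻¹ * ∑ k, ∑ l, B i k * B j l * Mhat (C.mulVec z + a') k l := by
    intro i j
    funext z
    rw [hM z]
    simp only [Matrix.smul_apply, smul_eq_mul, Matrix.mul_apply, Matrix.transpose_apply,
      Fin.sum_univ_two]
    ring
  -- differentiability facts
  have hGd : Differentiable ℝ (fun z : Fin 2 → ℝ => C.mulVec z + a') := by
    have h1 : Differentiable ℝ (fun z : Fin 2 → ℝ => C.mulVec z) :=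
      C.mulVecLin.toContinuousLinearMap.differentiable
    exact h1.add_const a'
  have hg1 : ∀ k l : Fin 2, Differentiable ℝ (fun z => Mhat z k l) :=
    fun k l => (hsmooth k l).differentiable (by norm_num)
  have hgp : ∀ (q k l : Fin 2), Differentiable ℝ (pd q (fun z => Mhat z k l)) :=
    fun q k l => pd_differentiable _ (hsmooth k l) q
  have d1 : ∀ k l : Fin 2, Differentiable ℝ (fun z => Mhat (C.mulVec z + a') k l) :=
    fun k l => (hg1 k l).comp hGd
  have d2 : ∀ (q k l : Fin 2),
      Differentiable ℝ (fun z => pd q (fun w => Mhat w k l) (C.mulVec z + a')) :=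
    fun q k l => (hgp q k l).comp hGd
  -- first derivative
  have step1 : ∀ (i j : Fin 2) (y : Fin 2 → ℝ),
      pd j (fun z => M z i j) y
        = c⁻¹ * ∑ k, ∑ l, B i k * B j l *
            ∑ q, C q j * pd q (fun w => Mhat w k l) (C.mulVec y + a') := by
    intro i j y
    rw [hMfun i j]
    rw [pd_const_mul _ _ _ _ (by
      exact (Differentiable.fun_sum (fun k _ => Differentiable.fun_sum
        (fun l _ => ((d1 k l).const_mul _)))) y)]
    congr 1
    rw [pd_sum _ _ _ (fun k =>
      (Differentiable.fun_sum (fun l _ => ((d1 k l).const_mul _))) y)]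
    refine Finset.sum_congr rfl (fun k _ => ?_)
    rw [pd_sum _ _ _ (fun l => ((d1 k l).const_mul _) y)]
    refine Finset.sum_congr rfl (fun l _ => ?_)
    rw [pd_const_mul _ _ _ _ ((d1 k l) y)]
    congr 1
    exact pd_comp_affine C a' (fun w => Mhat w k l) (hg1 k l) j y
  -- second derivative at the mapped point
  have step2 : ∀ (i j : Fin 2),
      pd i (pd j (fun z => M z i j)) (B.mulVec x + a)
        = c⁻¹ * ∑ k, ∑ l, B i k * B j l * ∑ q, C q j *
            ∑ r, C r i * pd r (pd q (fun w => Mhat w k l)) x := by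
    intro i j
    have hfun : pd j (fun z => M z i j)
        = fun y => c⁻¹ * ∑ k, ∑ l, B i k * B j l *
            ∑ q, C q j * pd q (fun w => Mhat w k l) (C.mulVec y + a') :=
      funext (step1 i j)
    rw [hfun]
    rw [pd_const_mul _ _ _ _ (by
      exact (Differentiable.fun_sum (fun k _ => Differentiable.fun_sum (fun l _ =>
        (Differentiable.fun_sum (fun q _ => (d2 q k l).const_mul _)).const_mul _)))
        (B.mulVec x + a))]
    congr 1
    rw [pd_sum _ _ _ (fun k =>
      (Differentiable.fun_sum (fun l _ =>
        (Differentiable.fun_sum (fun q _ => (d2 q k l).const_mul _)).const_mul _)) (B.mulVec x + a))]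
    refine Finset.sum_congr rfl (fun k _ => ?_)
    rw [pd_sum _ _ _ (fun l =>
      ((Differentiable.fun_sum (fun q _ => (d2 q k l).const_mul _)).const_mul _) (B.mulVec x + a))]
    refine Finset.sum_congr rfl (fun l _ => ?_)
    rw [pd_const_mul _ _ _ _
      ((Differentiable.fun_sum (fun q _ => (d2 q k l).const_mul _)) (B.mulVec x + a))]
    congr 1
    rw [pd_sum _ _ _ (fun q => ((d2 q k l).const_mul _) (B.mulVec x + a))]
    refine Finset.sum_congr rfl (fun q _ => ?_)
    rw [pd_const_mul _ _ _ _ ((d2 q k l) (B.mulVec x + a))]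
    congr 1
    have h := pd_comp_affine C a' (pd q (fun w => Mhat w k l)) (hgp q k l) i (B.mulVec x + a)
    rw [hGF x] at h
    exact h
  -- conclude
  show c * divdivT M (B.mulVec x + a) = divdivT Mhat x
  have hexp : divdivT M (B.mulVec x + a)
      = c⁻¹ * ∑ i, ∑ j, ∑ k, ∑ l, B i k * B j l * ∑ q, C q j *
          ∑ r, C r i * pd r (pd q (fun w => Mhat w k l)) x := by
    unfold divdivT
    rw [Finset.mul_sum]
    refine Finset.sum_congr rfl (fun i _ => ?_)
    rw [Finset.mul_sum]
    refine Finset.sum_congr rfl (fun j _ => ?_)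
    exact step2 i j
  rw [hexp, ← mul_assoc, mul_inv_cancel₀ hc, one_mul,
    key_sum C B hCB (fun r q k l => pd r (pd q (fun w => Mhat w k l)) x)]
  rfl
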